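/- Let V be a weight module over sl2 with finite-dimensional weight spaces, whose support is contained in λ+2ℤ. If e acts locally nilpotently on V, then supp(V) is bounded from above (i.e., {q ∈ ℝ : λ+2q ∈ supp(V)} is bounded above). -/

import Mathlib

section sl2aux

variable {V : Type} [AddCommGroup V] [Module ℂ V] {e f h : Module.End ℂ V}

lemma he_pt (he : h * e - e * h = 2 • e) (v : V) :
    h (e v) = e (h v) + (2:ℂ) • e v := by
  have := LinearMap.ext_iff.mp he v
  simp only [LinearMap.sub_apply, Module.End.mul_apply, LinearMap.smul_apply] at this
  rw [sub_eq_iff_eq_add] at this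
  rw [this, two_smul, two_smul]
  abel

lemma hf_pt (hf : h * f - f * h = -(2 • f)) (v : V) :
    h (f v) = f (h v) - (2:ℂ) • f v := by
  have := LinearMap.ext_iff.mp hf v
  simp only [LinearMap.sub_apply, Module.End.mul_apply, LinearMap.neg_apply,
    LinearMap.smul_apply] at this
  rw [sub_eq_iff_eq_add] at this
  rw [this, two_smul, two_smul]
  abel

lemma ef_pt (hef : e * f - f * e = h) (v : V) :
    e (f v) = f (e v) + h v := by
  have := LinearMap.ext_iff.mp hef v
  simp only [LinearMap.sub_apply, Module.End.mul_apply] at this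
  rw [sub_eq_iff_eq_add] at this
  rw [this]
  abel

lemma weight_up (he : h * e - e * h = 2 • e) {v : V} {μ : ℂ} (hv : h v = μ • v) :
    ∀ n : ℕ, h ((e ^ n) v) = (μ + 2 * n) • (e ^ n) v := by
  intro n
  induction n with
  | zero => simpa using hv
  | succ n ih =>
    rw [pow_succ', Module.End.mul_apply, he_pt he, ih, map_smul, ← add_smul]
    congr 1
    push_cast
    ring

lemma weight_down (hf : h * f - f * h = -(2 • f)) {v : V} {μ : ℂ} (hv : h v = μ • v) :
    ∀ n : ℕ, h ((f ^ n) v) = (μ - 2 * n) • (f ^ n) v := by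
  intro n
  induction n with
  | zero => simpa using hv
  | succ n ih =>
    rw [pow_succ', Module.End.mul_apply, hf_pt hf, ih, map_smul, ← sub_smul]
    congr 1
    push_cast
    ring

lemma e_fpow (hf : h * f - f * h = -(2 • f)) (hef : e * f - f * e = h)
    {v : V} {μ : ℂ} (hv : h v = μ • v) (hev : e v = 0) :
    ∀ m : ℕ, e ((f ^ (m + 1)) v) = ((m + 1) * (μ - m)) • (f ^ m) v := by
  intro m
  induction m with
  | zero =>
    simp only [zero_add, pow_one, pow_zero, Module.End.one_apply, Nat.cast_zero]
    rw [ef_pt hef, hev, map_zero, zero_add, hv]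
    norm_num
  | succ m ih =>
    rw [pow_succ' f (m + 1), Module.End.mul_apply, ef_pt hef, ih, map_smul,
      weight_down hf hv (m + 1), ← Module.End.mul_apply, ← pow_succ', ← add_smul]
    congr 1
    push_cast
    ring

lemma fpow_ne (hf : h * f - f * h = -(2 • f)) (hef : e * f - f * e = h)
    {v : V} {μ : ℂ} (hv : h v = μ • v) (hev : e v = 0) (hv0 : v ≠ 0) :
    ∀ m : ℕ, (∀ j : ℕ, j < m → μ ≠ j) → (f ^ m) v ≠ 0 := by
  intro m
  induction m with
  | zero => intro _; simpa using hv0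
  | succ m ih =>
    intro hcond h0
    have hme := e_fpow hf hef hv hev m
    rw [h0, map_zero] at hme
    have hcoeff : ((m : ℂ) + 1) * (μ - m) ≠ 0 := by
      apply mul_ne_zero
      · have : ((m + 1 : ℕ) : ℂ) ≠ 0 := Nat.cast_ne_zero.mpr (Nat.succ_ne_zero m)
        push_cast at this
        exact this
      · intro hz
        exact hcond m (Nat.lt_succ_self m) (by linear_combination hz)
    have : (f ^ m) v = 0 := by
      rcases smul_eq_zero.mp hme.symm with hc | hx
      · exact absurd hc hcoeff
      · exact hx
    exact ih (fun j hj => hcond j (Nat.lt_succ_of_lt hj)) this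

lemma casimir_pt (hf : h * f - f * h = -(2 • f)) (hef : e * f - f * e = h)
    {v : V} {μ : ℂ} (hv : h v = μ • v) (hev : e v = 0) :
    ∀ m : ℕ, h (h ((f ^ m) v)) + (2:ℂ) • h ((f ^ m) v) + (4:ℂ) • f (e ((f ^ m) v))
      = (μ ^ 2 + 2 * μ) • (f ^ m) v := by
  intro m
  match m with
  | 0 =>
    simp only [pow_zero, Module.End.one_apply, hev, map_zero, smul_zero, add_zero, hv,
      map_smul, smul_smul, ← add_smul]
    congr 1
    ring
  | m + 1 =>
    have hw := weight_down hf hv (m + 1)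
    have hew := e_fpow hf hef hv hev m
    rw [hw, map_smul, hw, hew, map_smul, ← Module.End.mul_apply, ← pow_succ', smul_smul,
      smul_smul, smul_smul, ← add_smul, ← add_smul]
    congr 1
    push_cast
    ring

end sl2aux





/-- For a weight sl₂-module with finite-dimensional weight spaces whose
support lies in `λ + 2ℤ`, if `e` acts locally nilpotently then the support is bounded
from above. -/
theorem stmt_1 (V : Type) [AddCommGroup V] [Module ℂ V]
    (e f h : Module.End ℂ V)
    (he : h * e - e * h = 2 • e)
    (hf : h * f - f * h = -(2 • f))
    (hef : e * f - f * e = h)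
    (hweight : ⨆ μ : ℂ, h.eigenspace μ = ⊤)
    (hfd : ∀ μ : ℂ, FiniteDimensional ℂ (h.eigenspace μ))
    (lam : ℂ)
    (hsupp : ∀ μ : ℂ, h.eigenspace μ ≠ ⊥ → ∃ k : ℤ, μ = lam + 2 * k)
    (hnil : ∀ v : V, ∃ N : ℕ, (e ^ N) v = 0) :
    ∃ B : ℝ, ∀ q : ℝ, h.eigenspace (lam + 2 * (q : ℂ)) ≠ ⊥ → q ≤ B := by
  classical
  by_contra hB
  push_neg at hB
  -- Step 1: primitive vectors of arbitrarily large weight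
  have hPrim : ∀ B : ℝ, ∃ k : ℤ, B ≤ (k : ℝ) ∧
      ∃ w : V, w ≠ 0 ∧ e w = 0 ∧ h w = (lam + 2 * (k : ℂ)) • w := by
    intro B
    obtain ⟨q, hne, hBq⟩ := hB B
    obtain ⟨k, hk⟩ := hsupp _ hne
    have hqk : q = (k : ℝ) := by
      have h2 : (2 : ℂ) * (q : ℂ) = 2 * (k : ℂ) := by
        have := hk
        rwa [add_right_inj] at this
      have : (q : ℂ) = ((k : ℝ) : ℂ) := by
        have := mul_left_cancel₀ (two_ne_zero (α := ℂ)) h2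
        rw [this]; push_cast; ring
      exact_mod_cast this
    obtain ⟨v, hvmem, hv0⟩ := Submodule.ne_bot_iff _ |>.mp hne
    have hv : h v = (lam + 2 * (k : ℂ)) • v := by
      rw [← hk]
      exact Module.End.mem_eigenspace_iff.mp hvmem
    have hNpos : Nat.find (hnil v) ≠ 0 := by
      intro h0
      have hNspec : (e ^ Nat.find (hnil v)) v = 0 := Nat.find_spec (hnil v)
      rw [h0, pow_zero, Module.End.one_apply] at hNspec
      exact hv0 hNspec
    obtain ⟨M, hM⟩ : ∃ M, Nat.find (hnil v) = M + 1 :=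
      ⟨Nat.find (hnil v) - 1, (Nat.succ_pred_eq_of_pos (Nat.pos_of_ne_zero hNpos)).symm⟩
    refine ⟨k + M, ?_, (e ^ M) v, ?_, ?_, ?_⟩
    · rw [hqk] at hBq
      push_cast
      have : (0 : ℝ) ≤ (M : ℝ) := Nat.cast_nonneg M
      linarith
    · exact Nat.find_min (hnil v) (show M < Nat.find (hnil v) by omega)
    · rw [← Module.End.mul_apply, ← pow_succ', ← hM]
      exact Nat.find_spec (hnil v)
    · have := weight_up he hv M
      rw [this]
      congr 1
      push_cast
      ring
  -- base weight
  obtain ⟨k0, -, hk0⟩ := hPrim 0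
  -- Step 2: threshold K
  obtain ⟨K, hKk0, hKa, hKb⟩ :
      ∃ K : ℤ, k0 ≤ K ∧
        (∀ k : ℤ, K ≤ k → ∀ j : ℕ, (j : ℤ) < k - k0 → lam + 2 * (k : ℂ) ≠ (j : ℂ)) ∧
        (∀ k k' : ℤ, K ≤ k → K ≤ k' → k ≠ k' →
          (lam + 2 * (k : ℂ)) + (lam + 2 * (k' : ℂ)) + 2 ≠ 0) := by
    by_cases hz : ∃ z : ℤ, lam = (z : ℂ)
    · obtain ⟨z, rfl⟩ := hz
      refine ⟨max k0 (max (-k0 - z) (-z)), le_max_left _ _, ?_, ?_⟩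
      · intro k hk j hj hEq
        have h1 : -k0 - z ≤ k := le_trans (le_trans (le_max_left _ _) (le_max_right _ _)) hk
        have h2 : k0 ≤ k := le_trans (le_max_left _ _) hk
        have : (z + 2 * k : ℤ) = (j : ℤ) := by exact_mod_cast (by push_cast at hEq ⊢; linear_combination hEq : ((z + 2 * k : ℤ) : ℂ) = ((j : ℤ) : ℂ))
        omega
      · intro k k' hk hk' hne hEq
        have h1 : -z ≤ k := le_trans (le_trans (le_max_right _ _) (le_max_right _ _)) hk
        have h1' : -z ≤ k' := le_trans (le_trans (le_max_right _ _) (le_max_right _ _)) hk'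
        have : (2 * z + 2 * k + 2 * k' + 2 : ℤ) = 0 := by
          exact_mod_cast (by push_cast; linear_combination hEq : ((2 * z + 2 * k + 2 * k' + 2 : ℤ) : ℂ) = ((0 : ℤ) : ℂ))
        omega
    · refine ⟨k0, le_refl _, ?_, ?_⟩
      · intro k hk j hj hEq
        exact hz ⟨(j : ℤ) - 2 * k, by push_cast; linear_combination hEq⟩
      · intro k k' hk hk' hne hEq
        exact hz ⟨-(k + k' + 1), by push_cast; linear_combination (hEq / 2)⟩
  -- Step 3: infinitely many primitive weights above K
  set P : Set ℤ := {k | K ≤ k ∧ ∃ w : V, w ≠ 0 ∧ e w = 0 ∧ h w = (lam + 2 * (k : ℂ)) • w}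
    with hPdef
  have hPinf : P.Infinite := by
    intro hfin
    obtain ⟨b, hb⟩ := hfin.bddAbove
    obtain ⟨k, hk1, hk2⟩ := hPrim (((max b K : ℤ) : ℝ) + 1)
    have hk3 : (max b K : ℤ) + 1 ≤ k := by exact_mod_cast hk1
    have hkP : k ∈ P := ⟨by omega, hk2⟩
    have := hb hkP
    omega
  -- Step 4: for each k ∈ P, an eigenvector of the Casimir operator inside W
  set C : Module.End ℂ V := h * h + (2 : ℂ) • h + (4 : ℂ) • (f * e) with hCdef
  have hCapp : ∀ w : V, C w = h (h w) + (2:ℂ) • h w + (4:ℂ) • f (e w) := by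
    intro w
    simp [hCdef, Module.End.mul_apply]
  have key : ∀ k : P, ∃ w : V, w ≠ 0 ∧ w ∈ h.eigenspace (lam + 2 * ((k0 : ℤ) : ℂ)) ∧
      C w = ((lam + 2 * ((k : ℤ) : ℂ)) ^ 2 + 2 * (lam + 2 * ((k : ℤ) : ℂ))) • w := by
    rintro ⟨k, hkK, v, hv0, hve, hvh⟩
    have hk0le : k0 ≤ k := le_trans hKk0 hkK
    set m : ℕ := (k - k0).toNat with hmdef
    have hm : (m : ℤ) = k - k0 := Int.toNat_of_nonneg (by omega)
    have hmC : (m : ℂ) = (k : ℂ) - (k0 : ℂ) := by exact_mod_cast congrArg (fun z : ℤ => (z : ℂ)) hm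
    refine ⟨(f ^ m) v, ?_, ?_, ?_⟩
    · apply fpow_ne hf hef hvh hve hv0
      intro j hj
      apply hKa k hkK j
      omega
    · rw [Module.End.mem_eigenspace_iff, weight_down hf hvh m]
      congr 1
      rw [hmC]
      ring
    · rw [hCapp]
      exact casimir_pt hf hef hvh hve m
  choose w hw0 hwW hwC using key
  -- Step 5: linear independence
  have hinj : Function.Injective
      (fun k : P => (lam + 2 * ((k : ℤ) : ℂ)) ^ 2 + 2 * (lam + 2 * ((k : ℤ) : ℂ))) := by
    intro k1 k2 hEq
    by_contra hne
    have hne' : (k1 : ℤ) ≠ (k2 : ℤ) := fun hc => hne (Subtype.ext hc)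
    simp only at hEq
    have hfact : ((lam + 2 * ((k1 : ℤ) : ℂ)) - (lam + 2 * ((k2 : ℤ) : ℂ))) *
        ((lam + 2 * ((k1 : ℤ) : ℂ)) + (lam + 2 * ((k2 : ℤ) : ℂ)) + 2) = 0 := by
      linear_combination hEq
    rcases mul_eq_zero.mp hfact with h1 | h2
    · have : ((k1 : ℤ) : ℂ) = ((k2 : ℤ) : ℂ) := by linear_combination (h1 / 2)
      exact hne' (by exact_mod_cast this)
    · exact hKb _ _ k1.2.1 k2.2.1 hne' h2
  have hLI : LinearIndependent ℂ w := by
    apply C.eigenvectors_linearIndependent'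
      (fun k : P => (lam + 2 * ((k : ℤ) : ℂ)) ^ 2 + 2 * (lam + 2 * ((k : ℤ) : ℂ))) hinj
    intro k
    exact ⟨Module.End.mem_eigenspace_iff.mpr (hwC k), hw0 k⟩
  have hLI2 : LinearIndependent ℂ
      (fun k : P => (⟨w k, hwW k⟩ : h.eigenspace (lam + 2 * ((k0 : ℤ) : ℂ)))) := by
    apply LinearIndependent.of_comp (Submodule.subtype _)
    exact hLI
  haveI : FiniteDimensional ℂ (h.eigenspace (lam + 2 * ((k0 : ℤ) : ℂ))) := hfd _
  haveI : Infinite P := hPinf.to_subtype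
  have hlt := hLI2.lt_aleph0_of_finiteDimensional
  exact absurd hlt (not_lt.mpr (Cardinal.infinite_iff.mp ‹Infinite P›))
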